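/- Let R be a commutative ring and (a, b) a regular sequence in R. Then the kernel of the R-algebra homomorphism R[w₁, w₂] → R[t] sending w₁ ↦ a·t and w₂ ↦ b·t (the Rees algebra presentation of the ideal (a,b)) is the ideal generated by the single Koszul relation b·w₁ − a·w₂. -/

import Mathlib

open MvPolynomial Finset Pointwise

section Aux
variable {R : Type*} [CommRing R] (a b : R)

private lemma mono_eq (m : Fin 2 →₀ ℕ) (c : R) :
    (monomial m c : MvPolynomial (Fin 2) R) = C c * X 0 ^ (m 0) * X 1 ^ (m 1) := by
  rw [monomial_eq, Finsupp.prod_fintype _ _ (fun i => pow_zero _), Fin.prod_univ_two, mul_assoc]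

private lemma deg_eq (m : Fin 2 →₀ ℕ) : m.degree = m 0 + m 1 := by
  rw [Finsupp.degree_eq_weight_one, Finsupp.weight_apply, Finsupp.sum_fintype, Fin.sum_univ_two]
  · simp
  · simp

private lemma ev_mono (m : Fin 2 →₀ ℕ) (c : R) :
    aeval (![a, b]) (monomial m c) = c * a ^ (m 0) * b ^ (m 1) := by
  simp [mono_eq]

private lemma phi_mono (m : Fin 2 →₀ ℕ) (c : R) :
    aeval (![Polynomial.C a * Polynomial.X, Polynomial.C b * Polynomial.X] :
      Fin 2 → Polynomial R) (monomial m c)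
      = Polynomial.C (c * a ^ (m 0) * b ^ (m 1)) * Polynomial.X ^ (m 0 + m 1) := by
  simp only [mono_eq, map_mul, map_pow, aeval_X, aeval_C, Matrix.cons_val_zero,
    Matrix.cons_val_one, Matrix.head_cons, Polynomial.algebraMap_eq]
  simp only [mul_pow, map_mul, map_pow, Polynomial.C_mul, Polynomial.C_pow]
  ring

end Aux

section Aux2
variable {R : Type*} [CommRing R] (a b : R)

private lemma coeff_phi (p : MvPolynomial (Fin 2) R) (n : ℕ) :
    Polynomial.coeff (aeval
        (![Polynomial.C a * Polynomial.X, Polynomial.C b * Polynomial.X] :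
          Fin 2 → Polynomial R) p) n
      = aeval (![a, b]) (homogeneousComponent n p) := by
  induction p using MvPolynomial.induction_on' with
  | add p q hp hq => simp [map_add, hp, hq]
  | monomial m c =>
      rw [phi_mono, homogeneousComponent_of_mem (isHomogeneous_monomial c rfl)]
      rw [Polynomial.coeff_C_mul, Polynomial.coeff_X_pow]
      rw [deg_eq]
      split_ifs with h1
      · rw [mul_one, ev_mono]
      · simp

private lemma key (ha : ∀ x : R, a * x = 0 → x = 0)
    (hb : ∀ x : R, b * x ∈ Ideal.span {a} → x ∈ Ideal.span {a}) :
    ∀ (n : ℕ) (c : ℕ → R), (∑ i ∈ range (n+1), c i * a ^ i * b ^ (n-i)) = 0 →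
      (∑ i ∈ range (n+1), (C (c i) * X 0 ^ i * X 1 ^ (n - i) : MvPolynomial (Fin 2) R))
        ∈ Ideal.span {(C b * X 0 - C a * X 1 : MvPolynomial (Fin 2) R)} := by
  have hbp : ∀ (k : ℕ) (x : R), b ^ k * x ∈ Ideal.span {a} → x ∈ Ideal.span {a} := by
    intro k
    induction k with
    | zero => intro x hx; simpa using hx
    | succ k ih =>
        intro x hx
        refine hb x (ih (b * x) ?_)
        rw [← mul_assoc, ← pow_succ]
        exact hx
  intro n
  induction n with
  | zero =>
      intro c hc
      simp only [zero_add, range_one, sum_singleton, pow_zero, mul_one, Nat.sub_zero] at hc ⊢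
      rw [hc]
      simp
  | succ n ih =>
      intro c hc
      rw [Finset.sum_range_succ'] at hc
      simp only [Nat.succ_sub_succ, pow_zero, mul_one, Nat.sub_zero] at hc
      -- hc : ∑ i ∈ range (n+1), c (i+1) * a^(i+1) * b^(n-i) + c 0 * b^(n+1) = 0
      have hS : (∑ i ∈ range (n+1), c (i+1) * a ^ (i+1) * b ^ (n-i))
          = a * ∑ i ∈ range (n+1), c (i+1) * a ^ i * b ^ (n-i) := by
        rw [Finset.mul_sum]; exact Finset.sum_congr rfl fun i _ => by ring
      rw [hS] at hc
      obtain ⟨d, hd⟩ : a ∣ c 0 := by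
        rw [← Ideal.mem_span_singleton]
        refine hbp (n+1) (c 0) (Ideal.mem_span_singleton.mpr
          ⟨-(∑ i ∈ range (n+1), c (i+1) * a ^ i * b ^ (n-i)), by linear_combination hc⟩)
      set c' : ℕ → R := fun j => if j = 0 then c 1 + d * b else c (j+1) with hc'def
      have hc' : (∑ j ∈ range (n+1), c' j * a ^ j * b ^ (n-j)) = 0 := by
        apply ha
        simp only [Finset.sum_range_succ', zero_add, pow_zero, mul_one, Nat.sub_zero]
        simp only [Finset.sum_range_succ', zero_add, pow_zero, mul_one, Nat.sub_zero] at hc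
        have e : (∑ k ∈ range n, c' (k+1) * a ^ (k+1) * b ^ (n-(k+1)))
            = ∑ k ∈ range n, c (k+1+1) * a ^ (k+1) * b ^ (n-(k+1)) :=
          Finset.sum_congr rfl fun j _ => by
            simp only [hc'def, if_neg (Nat.succ_ne_zero j)]
        have e5 : c' 0 = c 1 + d * b := by simp only [hc'def, if_pos rfl]
        linear_combination hc + a * e + a * b ^ n * e5 - b ^ (n+1) * hd
      have hmem := ih c' hc'
      have expand : (∑ i ∈ range (n+1+1), (C (c i) * X 0 ^ i * X 1 ^ (n+1-i) :
            MvPolynomial (Fin 2) R))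
          = X 0 * (∑ j ∈ range (n+1), C (c' j) * X 0 ^ j * X 1 ^ (n-j))
            - (C d * X 1 ^ n) * (C b * X 0 - C a * X 1) := by
        simp only [Finset.sum_range_succ', zero_add, Nat.succ_sub_succ, Nat.sub_zero,
          pow_zero, mul_one, pow_one]
        have e : (∑ k ∈ range n, (C (c' (k+1)) * X 0 ^ (k+1) * X 1 ^ (n-(k+1)) :
              MvPolynomial (Fin 2) R))
            = ∑ k ∈ range n, C (c (k+1+1)) * X 0 ^ (k+1) * X 1 ^ (n-(k+1)) :=
          Finset.sum_congr rfl fun j _ => by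
            simp only [hc'def, if_neg (Nat.succ_ne_zero j)]
        have e2 : X 0 * (∑ k ∈ range n, (C (c (k+1+1)) * X 0 ^ (k+1) * X 1 ^ (n-(k+1)) :
              MvPolynomial (Fin 2) R))
            = ∑ k ∈ range n, C (c (k+1+1)) * X 0 ^ (k+1+1) * X 1 ^ (n-(k+1)) := by
          rw [Finset.mul_sum]; exact Finset.sum_congr rfl fun j _ => by ring
        have e3 : (C (c' 0) : MvPolynomial (Fin 2) R) = C (c 1) + C d * C b := by
          simp only [hc'def, if_pos rfl, map_add, map_mul]
        have e4 : (C (c 0) : MvPolynomial (Fin 2) R) = C a * C d := by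
          rw [hd, map_mul]
        linear_combination (-(X 0 : MvPolynomial (Fin 2) R)) * e - e2
          - X 0 * X 1 ^ n * e3 + X 1 ^ (n+1) * e4
      rw [expand]
      exact Ideal.sub_mem _ (Ideal.mul_mem_left _ _ hmem)
        (Ideal.mul_mem_left _ _ (Ideal.subset_span rfl))

private lemma hrepr {n : ℕ} {h : MvPolynomial (Fin 2) R} (hh : h.IsHomogeneous n) :
    h = ∑ i ∈ range (n+1),
      C (coeff (Finsupp.single 0 i + Finsupp.single 1 (n-i)) h) * X 0 ^ i * X 1 ^ (n-i) := by
  set σ : ℕ → (Fin 2 →₀ ℕ) := fun i => Finsupp.single 0 i + Finsupp.single 1 (n-i) with hσ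
  have hσ0 : ∀ i, σ i 0 = i := by
    intro i
    simp [hσ, Finsupp.single_apply]
  have hσ1 : ∀ i, σ i 1 = n - i := by
    intro i
    simp [hσ, Finsupp.single_apply]
  have hsub : h.support ⊆ (range (n+1)).image σ := by
    intro m hm
    have hdeg : m 0 + m 1 = n := by
      rw [← deg_eq m, Finsupp.degree_eq_weight_one]
      exact hh (mem_support_iff.mp hm)
    have hmem : m 0 ∈ range (n+1) := mem_range.mpr (by omega)
    refine Finset.mem_image.mpr ⟨m 0, hmem, ?_⟩
    ext x
    fin_cases x
    · show σ (m 0) 0 = m 0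
      rw [hσ0]
    · show σ (m 0) 1 = m 1
      rw [hσ1]; omega
  have hinj : ∀ x ∈ range (n+1), ∀ y ∈ range (n+1), σ x = σ y → x = y := by
    intro x _ y _ hxy
    have := DFunLike.congr_fun hxy (0 : Fin 2)
    rwa [hσ0, hσ0] at this
  conv_lhs => rw [h.as_sum]
  rw [Finset.sum_subset hsub (fun m _ hm => by
    rw [notMem_support_iff.mp hm, monomial_zero])]
  rw [Finset.sum_image hinj]
  exact Finset.sum_congr rfl fun i _ => by rw [mono_eq, hσ0, hσ1]

end Aux2

/-- For `(a, b)` a regular sequence in a commutative ring `R`, the kernel of the `R`-algebra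
map `R[w₁, w₂] → R[t]`, `w₁ ↦ a·t`, `w₂ ↦ b·t` (presenting the Rees algebra of the ideal
`(a,b)`) is generated by the single Koszul relation `b·w₁ − a·w₂`. -/
theorem stmt6 (R : Type*) [CommRing R] (a b : R)
    (hreg : RingTheory.Sequence.IsRegular R [a, b]) :
    RingHom.ker (MvPolynomial.aeval
        (![Polynomial.C a * Polynomial.X, Polynomial.C b * Polynomial.X] :
          Fin 2 → Polynomial R) :
        MvPolynomial (Fin 2) R →ₐ[R] Polynomial R).toRingHom =
      Ideal.span {C b * X 0 - C a * X 1} := by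
  obtain ⟨hw, -⟩ := hreg
  rw [RingTheory.Sequence.isWeaklyRegular_cons_iff] at hw
  obtain ⟨ha0, hw2⟩ := hw
  rw [RingTheory.Sequence.isWeaklyRegular_singleton_iff] at hw2
  have ha : ∀ x : R, a * x = 0 → x = 0 := by
    intro x hx
    exact ha0 (show a • x = a • 0 by simpa [smul_eq_mul] using hx)
  have hb : ∀ x : R, b * x ∈ Ideal.span {a} → x ∈ Ideal.span {a} := by
    intro x hx
    rw [Ideal.mem_span_singleton] at hx ⊢
    obtain ⟨y, hy⟩ := hx
    have h0 : (b • Submodule.Quotient.mk x : QuotSMulTop a R) = b • (0 : QuotSMulTop a R) := by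
      rw [smul_zero, ← Submodule.Quotient.mk_smul, Submodule.Quotient.mk_eq_zero]
      have : b • x = a • y := by simpa [smul_eq_mul] using hy
      rw [this]
      exact Submodule.smul_mem_pointwise_smul y a ⊤ Submodule.mem_top
    have hx0 := hw2 h0
    rw [Submodule.Quotient.mk_eq_zero] at hx0
    rw [← SetLike.mem_coe, Submodule.coe_pointwise_smul] at hx0
    obtain ⟨s, -, hs⟩ := hx0
    exact ⟨s, by rw [← hs]; simp [smul_eq_mul]⟩
  apply le_antisymm
  · intro f hf
    have hf' : aeval (![Polynomial.C a * Polynomial.X, Polynomial.C b * Polynomial.X] :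
        Fin 2 → Polynomial R) f = 0 := hf
    have hcomp : ∀ i : ℕ, aeval (![a, b]) (homogeneousComponent i f) = 0 := by
      intro i
      rw [← coeff_phi a b f i, hf', Polynomial.coeff_zero]
    rw [← sum_homogeneousComponent f]
    apply Ideal.sum_mem
    intro i _
    have hav := hcomp i
    rw [hrepr (homogeneousComponent_isHomogeneous i f)] at hav
    simp only [map_sum, map_mul, map_pow, aeval_C, aeval_X, Matrix.cons_val_zero,
      Matrix.cons_val_one, Matrix.head_cons, Algebra.algebraMap_self, RingHom.id_apply] at hav
    rw [hrepr (homogeneousComponent_isHomogeneous i f)]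
    exact key a b ha hb i
      (fun j => coeff (Finsupp.single 0 j + Finsupp.single 1 (i-j)) (homogeneousComponent i f))
      hav
  · rw [Ideal.span_le]
    rintro g hg
    rw [Set.mem_singleton_iff] at hg
    subst hg
    rw [SetLike.mem_coe, RingHom.mem_ker]
    show aeval (![Polynomial.C a * Polynomial.X, Polynomial.C b * Polynomial.X] :
        Fin 2 → Polynomial R) (C b * X 0 - C a * X 1) = 0
    simp only [map_sub, map_mul, aeval_C, aeval_X, Matrix.cons_val_zero, Matrix.cons_val_one,
      Matrix.head_cons, Polynomial.algebraMap_eq]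
    ring
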